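/- (Normal equation for the A₂ update.) Fix real matrices X_k (N×N) and R_k (p×p) for k = 1,…,K, a matrix A₁ (N×p), and constants λ_A ≥ 0, λ_e ≥ 0, ρ > 0. Let G(A) = ½·Σ_k ‖X_k − A₁·R_k·Aᵀ‖_F² + ½·λ_A·‖A‖_F² + ½·λ_e·‖A₁ − A‖_F² + (1/ρ)·‖A‖_F². Then the p×p matrix H = Σ_k R_kᵀ·A₁ᵀ·A₁·R_k + (λ_A + λ_e + 2/ρ)·I_p is positive definite (hence invertible), and A₂* = (Σ_k X_kᵀ·A₁·R_k + λ_e·A₁)·H⁻¹ is the unique global minimizer of G. -/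

import Mathlib

open Matrix

/-- Frobenius norm of a real matrix. -/
noncomputable def frobNorm {m n : ℕ} (M : Matrix (Fin m) (Fin n) ℝ) : ℝ :=
  Real.sqrt (∑ i, ∑ j, M i j ^ 2)


lemma frob_sq {m n : ℕ} (M : Matrix (Fin m) (Fin n) ℝ) :
    frobNorm M ^ 2 = Matrix.trace (Mᵀ * M) := by
  rw [frobNorm, Real.sq_sqrt (by positivity)]
  rw [Matrix.trace]
  simp only [Matrix.diag, Matrix.mul_apply, Matrix.transpose_apply]
  rw [Finset.sum_comm]
  simp [sq]

lemma tr_tmul_comm {m n : ℕ} (A B : Matrix (Fin m) (Fin n) ℝ) :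
    trace (Aᵀ * B) = trace (Bᵀ * A) := by
  rw [← trace_transpose (Aᵀ * B), transpose_mul, transpose_transpose]

lemma expand_k {N p : ℕ} (Xk : Matrix (Fin N) (Fin N) ℝ) (Rk : Matrix (Fin p) (Fin p) ℝ)
    (A₁ A : Matrix (Fin N) (Fin p) ℝ) :
    trace ((Xk - A₁ * Rk * Aᵀ)ᵀ * (Xk - A₁ * Rk * Aᵀ))
      = trace (Xkᵀ * Xk) - 2 * trace (Aᵀ * (Xkᵀ * A₁ * Rk))
        + trace (Aᵀ * A * (Rkᵀ * A₁ᵀ * A₁ * Rk)) := by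
  have h2 : trace (Xkᵀ * (A₁ * Rk * Aᵀ)) = trace (Aᵀ * (Xkᵀ * A₁ * Rk)) := by
    rw [show Xkᵀ * (A₁ * Rk * Aᵀ) = (Xkᵀ * A₁ * Rk) * Aᵀ by simp [Matrix.mul_assoc], trace_mul_comm]
  have h1 : trace ((A₁ * Rk * Aᵀ)ᵀ * Xk) = trace (Aᵀ * (Xkᵀ * A₁ * Rk)) := by
    rw [tr_tmul_comm, h2]
  have h3 : trace ((A₁ * Rk * Aᵀ)ᵀ * (A₁ * Rk * Aᵀ)) = trace (Aᵀ * A * (Rkᵀ * A₁ᵀ * A₁ * Rk)) := by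
    simp only [transpose_mul, transpose_transpose]
    rw [show A * (Rkᵀ * A₁ᵀ) * (A₁ * Rk * Aᵀ) = (A * (Rkᵀ * A₁ᵀ * A₁ * Rk)) * Aᵀ by
        simp [Matrix.mul_assoc], trace_mul_comm, ← Matrix.mul_assoc]
  simp only [transpose_sub, sub_mul, mul_sub, trace_sub]
  rw [h1, h2, h3]; ring

lemma quad_diff {n p : ℕ} (H : Matrix (Fin p) (Fin p) ℝ) (B A A' : Matrix (Fin n) (Fin p) ℝ)
    (hH : Hᵀ = H) (hB : A' * H = B) :
    ((1/2) * trace (Aᵀ * A * H) - trace (Aᵀ * B))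
      - ((1/2) * trace (A'ᵀ * A' * H) - trace (A'ᵀ * B))
    = (1/2) * trace ((A - A')ᵀ * (A - A') * H) := by
  have key : trace (A'ᵀ * A * H) = trace (Aᵀ * A' * H) := by
    rw [← trace_transpose (A'ᵀ * A * H)]
    simp only [transpose_mul, transpose_transpose, hH]
    rw [trace_mul_comm]
  subst hB
  simp only [transpose_sub, sub_mul, Matrix.mul_sub, Matrix.sub_mul, trace_sub, Matrix.mul_assoc] at *
  ring_nf
  linear_combination (1/2) * key

lemma quad_pos {n p : ℕ} {H : Matrix (Fin p) (Fin p) ℝ} (hH : H.PosDef)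
    {D : Matrix (Fin n) (Fin p) ℝ} (hD : D ≠ 0) : 0 < trace (Dᵀ * D * H) := by
  have repr : trace (Dᵀ * D * H) = ∑ i, (star (D i)) ⬝ᵥ (H *ᵥ (D i)) := by
    rw [Matrix.mul_assoc, trace_mul_comm]
    rw [Matrix.trace]
    refine Finset.sum_congr rfl fun i _ => ?_
    simp only [Matrix.diag, Matrix.mul_apply, Matrix.transpose_apply, dotProduct, Matrix.mulVec,
      star_trivial, Finset.mul_sum, Finset.sum_mul]
    rw [Finset.sum_comm]
    exact Finset.sum_congr rfl fun a _ => Finset.sum_congr rfl fun b _ => by ring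
  rw [repr]
  obtain ⟨i, hi⟩ : ∃ i, D i ≠ 0 := by
    by_contra h; push_neg at h
    exact hD (by ext a b; simpa using congrFun (h a) b)
  refine Finset.sum_pos' (fun j _ => hH.posSemidef.dotProduct_mulVec_nonneg _) ⟨i, Finset.mem_univ i, hH.dotProduct_mulVec_pos hi⟩

/-- The ALS subproblem objective in `A₂`. -/
noncomputable def alsObjA₂ {N p K : ℕ}
    (X : Fin K → Matrix (Fin N) (Fin N) ℝ) (R : Fin K → Matrix (Fin p) (Fin p) ℝ)
    (A₁ : Matrix (Fin N) (Fin p) ℝ) (lamA lamE ρ : ℝ)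
    (A : Matrix (Fin N) (Fin p) ℝ) : ℝ :=
  (1 / 2) * ∑ k, frobNorm (X k - A₁ * R k * Aᵀ) ^ 2
    + (1 / 2) * lamA * frobNorm A ^ 2
    + (1 / 2) * lamE * frobNorm (A₁ - A) ^ 2
    + (1 / ρ) * frobNorm A ^ 2


lemma obj_expand {N p K : ℕ}
    (X : Fin K → Matrix (Fin N) (Fin N) ℝ) (R : Fin K → Matrix (Fin p) (Fin p) ℝ)
    (A₁ : Matrix (Fin N) (Fin p) ℝ) (lamA lamE ρ : ℝ)
    (A : Matrix (Fin N) (Fin p) ℝ) :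
    alsObjA₂ X R A₁ lamA lamE ρ A
      = ((1/2) * ∑ k, trace ((X k)ᵀ * X k) + (1/2) * lamE * trace (A₁ᵀ * A₁))
        + ((1/2) * trace (Aᵀ * A * (∑ k, (R k)ᵀ * A₁ᵀ * A₁ * R k
              + (lamA + lamE + 2 / ρ) • (1 : Matrix (Fin p) (Fin p) ℝ)))
          - trace (Aᵀ * (∑ k, (X k)ᵀ * A₁ * R k + lamE • A₁))) := by
  simp only [alsObjA₂, frob_sq]
  rw [Finset.sum_congr rfl (fun k _ => expand_k (X k) (R k) A₁ A)]
  have hA₁A : trace ((A₁ - A)ᵀ * (A₁ - A))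
      = trace (A₁ᵀ * A₁) - 2 * trace (Aᵀ * A₁) + trace (Aᵀ * A) := by
    simp only [transpose_sub, Matrix.sub_mul, Matrix.mul_sub, trace_sub]
    rw [tr_tmul_comm A₁ A]; ring
  rw [hA₁A]
  rw [Matrix.mul_add, trace_add, Matrix.mul_sum, trace_sum,
    Matrix.mul_add, trace_add, Matrix.mul_sum, trace_sum,
    mul_smul_comm, Matrix.mul_one, trace_smul, smul_eq_mul,
    Matrix.mul_smul, trace_smul, smul_eq_mul]
  rw [Finset.sum_add_distrib, Finset.sum_sub_distrib, ← Finset.mul_sum]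
  ring

/-- Normal equation for the `A₂` update: `H = Σ_k R_kᵀ A₁ᵀ A₁ R_k + (λ_A + λ_e + 2/ρ) I`
is positive definite and `A₂* = (Σ_k X_kᵀ A₁ R_k + λ_e A₁) H⁻¹` is the unique global
minimizer of the ALS subproblem objective. -/
theorem alsObjA₂_normal_equation {N p K : ℕ}
    (X : Fin K → Matrix (Fin N) (Fin N) ℝ) (R : Fin K → Matrix (Fin p) (Fin p) ℝ)
    (A₁ : Matrix (Fin N) (Fin p) ℝ) (lamA lamE ρ : ℝ)
    (hA : 0 ≤ lamA) (hE : 0 ≤ lamE) (hρ : 0 < ρ) :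
    (∑ k, (R k)ᵀ * A₁ᵀ * A₁ * R k
        + (lamA + lamE + 2 / ρ) • (1 : Matrix (Fin p) (Fin p) ℝ)).PosDef ∧
    ∀ A : Matrix (Fin N) (Fin p) ℝ,
      A ≠ (∑ k, (X k)ᵀ * A₁ * R k + lamE • A₁)
            * (∑ k, (R k)ᵀ * A₁ᵀ * A₁ * R k
                + (lamA + lamE + 2 / ρ) • (1 : Matrix (Fin p) (Fin p) ℝ))⁻¹ →
      alsObjA₂ X R A₁ lamA lamE ρ
          ((∑ k, (X k)ᵀ * A₁ * R k + lamE • A₁)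
            * (∑ k, (R k)ᵀ * A₁ᵀ * A₁ * R k
                + (lamA + lamE + 2 / ρ) • (1 : Matrix (Fin p) (Fin p) ℝ))⁻¹)
        < alsObjA₂ X R A₁ lamA lamE ρ A := by
  have hc : (0:ℝ) < lamA + lamE + 2 / ρ := by positivity
  set H : Matrix (Fin p) (Fin p) ℝ :=
    ∑ k, (R k)ᵀ * A₁ᵀ * A₁ * R k + (lamA + lamE + 2 / ρ) • 1 with hHdef
  set B : Matrix (Fin N) (Fin p) ℝ := ∑ k, (X k)ᵀ * A₁ * R k + lamE • A₁ with hBdef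
  have hS : (∑ k, (R k)ᵀ * A₁ᵀ * A₁ * R k : Matrix (Fin p) (Fin p) ℝ).PosSemidef := by
    refine Finset.sum_induction _ _ (fun a b ha hb => ha.add hb) Matrix.PosSemidef.zero
      (fun k _ => ?_)
    have := Matrix.posSemidef_conjTranspose_mul_self (A₁ * R k)
    simpa [Matrix.conjTranspose_mul, Matrix.conjTranspose_eq_transpose_of_trivial,
      Matrix.mul_assoc] using this
  have hcI : ((lamA + lamE + 2 / ρ) • (1 : Matrix (Fin p) (Fin p) ℝ)).PosDef := by
    refine Matrix.PosDef.of_dotProduct_mulVec_pos ?_ fun x hx => ?_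
    · simp [Matrix.IsHermitian, Matrix.conjTranspose_smul]
    · simp only [Matrix.smul_mulVec, Matrix.one_mulVec, dotProduct_smul, smul_eq_mul,
        star_trivial]
      exact mul_pos hc (Matrix.dotProduct_star_self_pos_iff.mpr hx)
  have hH : H.PosDef := Matrix.PosDef.posSemidef_add hS hcI
  have hHs : Hᵀ = H := by
    have := hH.isHermitian.eq
    rwa [Matrix.conjTranspose_eq_transpose_of_trivial] at this
  have hBe : (B * H⁻¹) * H = B := by
    rw [Matrix.mul_assoc, Matrix.nonsing_inv_mul H hH.det_pos.ne'.isUnit, Matrix.mul_one]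
  refine ⟨hH, fun A hne => ?_⟩
  rw [obj_expand, obj_expand]
  have hdiff := quad_diff H B A (B * H⁻¹) hHs hBe
  have hpos := quad_pos hH (sub_ne_zero.mpr hne)
  linarith
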